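/- Let k be an algebraically closed field, A a k-algebra, a an algebra automorphism of A with aⁿ = id for a positive integer n not divisible by the characteristic of k. Let L be a finite-dimensional simple A-module and let t be the minimal positive integer with (a*)ᵗL ≅ L, where a*M denotes the module with action twisted by a. Then there exists an isomorphism σ : a*(L ⊕ a*L ⊕ ⋯ ⊕ (a*)^{t-1}L) → L ⊕ a*L ⊕ ⋯ ⊕ (a*)^{t-1}L such that σ ∘ a*σ ∘ ⋯ ∘ (a*)^{n-1}σ = id. -/

import Mathlib

/-- Let `k` be an algebraically closed field, `A` a `k`-algebra, `a` an algebra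
automorphism of `A` with `aⁿ = 1` where the characteristic of `k` does not divide `n`.
Let `L` be a finite-dimensional simple `A`-module (given via `ρ : A → End_k L`) and `t`
the minimal positive integer with `(a*)ᵗ L ≅ L`.  Then the `A`-module
`M = L ⊕ a*L ⊕ ⋯ ⊕ (a*)^{t-1} L` (realised as `Fin t → L` with `x` acting on the `i`-th
component through `ρ (aⁱ x)`) admits an `A`-module isomorphism `σ : a*M → M` whose
`n`-fold twisted composite is the identity (as underlying linear maps, `σⁿ = 1`). -/
theorem stmt_1 (k : Type*) [Field k] [IsAlgClosed k]
    (A : Type*) [Ring A] [Algebra k A]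
    (a : A ≃ₐ[k] A) (n : ℕ) (hn : 0 < n) (hchar : (n : k) ≠ 0) (han : a ^ n = 1)
    (L : Type*) [AddCommGroup L] [Module k L] [FiniteDimensional k L] [Nontrivial L]
    (ρ : A →ₐ[k] Module.End k L)
    (hsimple : ∀ U : Submodule k L, (∀ x : A, ∀ u ∈ U, ρ x u ∈ U) → U = ⊥ ∨ U = ⊤)
    (t : ℕ) (ht : 0 < t)
    (hiso : ∃ g : L ≃ₗ[k] L, ∀ (x : A) (v : L), g (ρ ((a ^ t) x) v) = ρ x (g v))
    (hmin : ∀ s : ℕ, 0 < s → s < t →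
      ¬ ∃ g : L ≃ₗ[k] L, ∀ (x : A) (v : L), g (ρ ((a ^ s) x) v) = ρ x (g v)) :
    ∃ σ : (Fin t → L) ≃ₗ[k] (Fin t → L),
      (∀ (x : A) (v : Fin t → L),
        σ (fun i : Fin t => ρ ((a ^ ((i : ℕ) + 1)) x) (v i)) =
          fun i : Fin t => ρ ((a ^ (i : ℕ)) x) (σ v i)) ∧
      σ.toLinearMap ^ n = 1 := by
  obtain ⟨t', rfl⟩ : ∃ t', t = t' + 1 := ⟨t - 1, (Nat.succ_pred_eq_of_pos ht).symm⟩
  set T := t' + 1 with hT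
  obtain ⟨g, hg⟩ := hiso
  -- powers of `g` intertwine powers of `a ^ T`
  have hpow : ∀ (m : ℕ) (x : A) (v : L),
      (g.toLinearMap ^ m) (ρ ((a ^ (T * m)) x) v) = ρ x ((g.toLinearMap ^ m) v) := by
    intro m
    induction m with
    | zero => intro x v; simp
    | succ m ih =>
      intro x v
      have h1 : ρ ((a ^ (T * (m + 1))) x) v = ρ ((a ^ T) ((a ^ (T * m)) x)) v := by
        rw [show T * (m + 1) = T + T * m by ring, pow_add, AlgEquiv.mul_apply]
      rw [pow_succ, Module.End.mul_apply, Module.End.mul_apply, h1]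
      have h2 : g.toLinearMap (ρ ((a ^ T) ((a ^ (T * m)) x)) v)
          = ρ ((a ^ (T * m)) x) (g.toLinearMap v) := hg _ _
      rw [h2, ih]
  have hcoePow : ∀ (m : ℕ) (v : L), (g ^ m) v = (g.toLinearMap ^ m) v := by
    intro m
    induction m with
    | zero => intro v; rfl
    | succ m ih =>
      intro v
      rw [pow_succ, pow_succ, Module.End.mul_apply]
      have : (g ^ m * g) v = (g ^ m) (g v) := rfl
      rw [this, ih]
      rfl
  set q := n / T with hq
  set r := n % T with hr
  have hnqr : n = T * q + r := (Nat.div_add_mod n T).symm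
  have hr0 : r = 0 := by
    by_contra h0
    refine hmin r (Nat.pos_of_ne_zero h0) (Nat.mod_lt n (by omega)) ?_
    refine ⟨(g ^ q).symm, ?_⟩
    intro x u
    have key : ((a ^ (T * q)) ((a ^ r) x)) = x := by
      rw [← AlgEquiv.mul_apply, ← pow_add, ← hnqr, han, AlgEquiv.one_apply]
    have h2 := hpow q ((a ^ r) x) ((g ^ q).symm u)
    rw [key] at h2
    have h3 : (g.toLinearMap ^ q) ((g ^ q).symm u) = u := by
      rw [← hcoePow]; exact (g ^ q).apply_symm_apply u
    rw [h3] at h2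
    -- h2 : (g.toLinearMap ^ q) (ρ x ((g ^ q).symm u)) = ρ ((a ^ r) x) u
    rw [LinearEquiv.symm_apply_eq, hcoePow q]
    exact h2.symm
  have hnq : n = T * q := by omega
  have hq0 : 0 < q := Nat.pos_of_ne_zero (fun h => by
    rw [h, Nat.mul_zero] at hnq; omega)
  -- Schur's lemma: the `q`-th power of `g` commutes with the action, hence is a scalar
  have hGcomm : ∀ (x : A) (v : L),
      (g.toLinearMap ^ q) (ρ x v) = ρ x ((g.toLinearMap ^ q) v) := by
    intro x v
    have h1 := hpow q x v
    rw [← hnq, han, AlgEquiv.one_apply] at h1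
    exact h1
  obtain ⟨c, hc⟩ := Module.End.exists_eigenvalue (g.toLinearMap ^ q)
  have heig : Module.End.eigenspace (g.toLinearMap ^ q) c = ⊤ := by
    rcases hsimple (Module.End.eigenspace (g.toLinearMap ^ q) c) (fun x u hu => by
      rw [Module.End.mem_eigenspace_iff] at hu ⊢
      rw [hGcomm, hu, map_smul]) with h | h
    · exact absurd h hc
    · exact h
  have hcv : ∀ v : L, (g.toLinearMap ^ q) v = c • v := by
    intro v
    exact Module.End.mem_eigenspace_iff.mp (heig ▸ Submodule.mem_top)
  have hc0 : c ≠ 0 := by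
    intro h
    obtain ⟨v, hv⟩ := exists_ne (0 : L)
    apply hv
    apply (g ^ q).injective
    rw [hcoePow, hcv v, h, zero_smul, map_zero]
  obtain ⟨d, hd⟩ := IsAlgClosed.exists_pow_nat_eq (c⁻¹) hq0
  have hd0 : d ≠ 0 := by
    intro h
    rw [h, zero_pow hq0.ne'] at hd
    exact hc0 (by simpa [eq_comm, inv_eq_zero] using hd)
  -- rescale g
  set g' : L ≃ₗ[k] L := g.trans (LinearEquiv.smulOfNeZero k L d hd0) with hg'def
  have hg'app : ∀ v : L, g' v = d • g v := fun v => rfl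
  have hg' : ∀ (x : A) (v : L), g' (ρ ((a ^ T) x) v) = ρ x (g' v) := by
    intro x v
    rw [hg'app, hg'app, hg, map_smul]
  have hg'pow : ∀ (m : ℕ) (v : L),
      (g'.toLinearMap ^ m) v = d ^ m • ((g.toLinearMap ^ m) v) := by
    intro m
    induction m with
    | zero => intro v; simp
    | succ m ih =>
      intro v
      rw [pow_succ g'.toLinearMap, pow_succ g.toLinearMap, pow_succ d,
        Module.End.mul_apply, Module.End.mul_apply]
      have h5 : g'.toLinearMap v = d • g.toLinearMap v := rfl
      rw [h5, map_smul, ih, smul_smul, mul_comm (d ^ m) d]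
  have hg'q : ∀ v : L, (g'.toLinearMap ^ q) v = v := by
    intro v
    rw [hg'pow, hcv, hd, smul_smul, inv_mul_cancel₀ hc0, one_smul]
  -- build σ
  classical
  set F : Fin T → (L →ₗ[k] L) :=
    fun i => if i = 0 then g'.toLinearMap else LinearMap.id with hF
  set F' : Fin T → (L →ₗ[k] L) :=
    fun i => if i + 1 = 0 then g'.symm.toLinearMap else LinearMap.id with hF'
  set s : (Fin T → L) →ₗ[k] (Fin T → L) :=
    { toFun := fun v i => F i (v (i - 1))
      map_add' := fun v w => funext fun i => by simp
      map_smul' := fun cc v => funext fun i => by simp } with hs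
  set s' : (Fin T → L) →ₗ[k] (Fin T → L) :=
    { toFun := fun v i => F' i (v (i + 1))
      map_add' := fun v w => funext fun i => by simp
      map_smul' := fun cc v => funext fun i => by simp } with hs'
  have hss' : s ∘ₗ s' = LinearMap.id := by
    apply LinearMap.ext; intro v; funext i
    show F i (F' (i - 1) (v (i - 1 + 1))) = v i
    simp only [hF, hF', sub_add_cancel]
    by_cases hi : i = 0
    · rw [if_pos hi, if_pos hi]
      exact g'.apply_symm_apply (v i)
    · rw [if_neg hi, if_neg hi]
      rfl
  have hs's : s' ∘ₗ s = LinearMap.id := by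
    apply LinearMap.ext; intro v; funext i
    show F' i (F (i + 1) (v (i + 1 - 1))) = v i
    simp only [hF, hF', add_sub_cancel_right]
    by_cases hi : i + 1 = 0
    · rw [if_pos hi, if_pos hi]
      exact g'.symm_apply_apply (v i)
    · rw [if_neg hi, if_neg hi]
      rfl
  refine ⟨LinearEquiv.ofLinear s s' hss' hs's, ?_, ?_⟩
  · -- intertwining
    intro x v
    funext i
    rw [LinearEquiv.ofLinear_apply, LinearEquiv.ofLinear_apply]
    show F i (ρ ((a ^ (((i - 1 : Fin T) : ℕ) + 1)) x) (v (i - 1)))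
      = ρ ((a ^ (i : ℕ)) x) (F i (v (i - 1)))
    by_cases hi : i = 0
    · have hv1 : ((i - 1 : Fin T) : ℕ) = t' := by
        rw [Fin.coe_sub_one, if_pos hi]
      have hv0 : (i : ℕ) = 0 := by rw [hi]; rfl
      rw [hF]
      simp only [if_pos hi]
      rw [hv1, hv0, pow_zero, AlgEquiv.one_apply]
      exact hg' x (v (i - 1))
    · have hvne : (i : ℕ) ≠ 0 := fun h => hi (Fin.ext h)
      have hv1 : ((i - 1 : Fin T) : ℕ) + 1 = (i : ℕ) := by
        rw [Fin.coe_sub_one, if_neg hi]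
        omega
      rw [hF]
      simp only [if_neg hi]
      rw [hv1]
      rfl
  · -- σ ^ n = 1
    set σ := LinearEquiv.ofLinear s s' hss' hs's with hσ
    have hσs : ∀ v : Fin T → L, σ.toLinearMap v = s v := fun v => rfl
    open Fin.NatCast Fin.CommRing in
    have key : ∀ m : ℕ, m ≤ T → ∀ (v : Fin T → L) (i : Fin T),
        (σ.toLinearMap ^ m) v i =
          if (i : ℕ) < m then g' (v (i - (m : Fin T))) else v (i - (m : Fin T)) := by
      intro m
      induction m with
      | zero =>
        intro _ v i
        simp
      | succ m ih =>
        intro hm v i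
        rw [pow_succ, Module.End.mul_apply, ih (by omega), hσs]
        have hsub : ∀ (w : Fin T → L) (j : Fin T), s w j = F j (w (j - 1)) :=
          fun w j => rfl
        simp only [hsub]
        have hcast : ((m + 1 : ℕ) : Fin T) = (m : Fin T) + 1 := by exact Nat.cast_succ m
        have hsubsub : i - (m : Fin T) - 1 = i - ((m + 1 : ℕ) : Fin T) := by
          rw [hcast, sub_sub]
        have hmlt : m < T := by omega
        have hmval : ((m : Fin T) : ℕ) = m := Fin.val_cast_of_lt hmlt
        rcases lt_trichotomy (i : ℕ) m with h | h | h
        · have hne : i - (m : Fin T) ≠ 0 := by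
            rw [sub_ne_zero]
            intro he
            rw [he, hmval] at h
            exact lt_irrefl _ h
          simp only [hF]
          simp only [if_neg hne, if_pos h, if_pos (by omega : (i : ℕ) < m + 1)]
          rw [hsubsub]
          rfl
        · have he : i = (m : Fin T) := Fin.ext (by rw [hmval]; exact h)
          have h0 : i - (m : Fin T) = 0 := by rw [he, sub_self]
          simp only [hF]
          simp only [if_pos h0, if_neg (by omega : ¬ (i : ℕ) < m),
            if_pos (by omega : (i : ℕ) < m + 1)]
          rw [hsubsub]
          rfl
        · have hne : i - (m : Fin T) ≠ 0 := by
            rw [sub_ne_zero]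
            intro he
            rw [he, hmval] at h
            exact lt_irrefl _ h
          simp only [hF]
          simp only [if_neg hne, if_neg (by omega : ¬ (i : ℕ) < m),
            if_neg (by omega : ¬ (i : ℕ) < m + 1)]
          rw [hsubsub]
          rfl
    open Fin.NatCast Fin.CommRing in
    have keyT : ∀ (v : Fin T → L) (i : Fin T), (σ.toLinearMap ^ T) v i = g' (v i) := by
      intro v i
      rw [key T le_rfl, if_pos i.isLt]
      congr 1
      rw [Fin.natCast_self, sub_zero]
    have keyQ : ∀ (j : ℕ) (v : Fin T → L) (i : Fin T),
        ((σ.toLinearMap ^ T) ^ j) v i = (g'.toLinearMap ^ j) (v i) := by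
      intro j
      induction j with
      | zero => intro v i; simp
      | succ j ih =>
        intro v i
        rw [pow_succ (σ.toLinearMap ^ T) j, pow_succ g'.toLinearMap j,
          Module.End.mul_apply, Module.End.mul_apply, ih, keyT]
        rfl
    rw [hnq, pow_mul]
    apply LinearMap.ext
    intro v
    funext i
    rw [keyQ q v i, hg'q]
    rfl
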